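/- Fix bounded functions s_j : K_j → ℝ and t_i : V_i → ℝ with max{ max_j sup_{K_j}|s_j|, max_i sup_{V_i}|t_i| } < 1, and let Θ : (×_{j=1}^m B(K_j,Y)) × (×_{i=1}^n B(V_i,Y)) → B(X,Y) send (p,q) to the unique fixed point f(p,q) of the affine RB operator Φ(p)(q)(s)(t). Then Θ is a bijection: it is injective (f(p,q) = f(p̃,q̃) implies (p,q) = (p̃,q̃)), and for every f ∈ B(X,Y), setting p_j := f∘b_j − s_j·(f restricted to K_j) and q_i := f∘u_i − t_i·(f restricted to V_i) gives Θ(p,q) = f. -/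
import Mathlib


open Bornology

/-- With fixed `s`, `t` whose sup norms are bounded by a common `σ < 1`,
the map `Θ : (p,q) ↦ f(p,q)` is a bijection: it is injective (equal fixed points force the
tuples to agree on the sets `K j`, resp. `V i`), and for every bounded `f : X → Y`, setting
`p j := f ∘ b j − s j • f` and `q i := f ∘ u i − t i • f` gives `Θ(p,q) = f`. -/
theorem affine_RB_fixed_point_bijective {X Y : Type*} [Nonempty X]
    [NormedAddCommGroup Y] [NormedSpace ℝ Y] [CompleteSpace Y]
    {m n : ℕ} (K : Set X) (Kj : Fin m → Set X) (V : Fin n → Set X)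
    (b : Fin m → X → X) (u : Fin n → X → X)
    (hbinj : ∀ j, Set.InjOn (b j) (Kj j)) (huinj : ∀ i, Set.InjOn (u i) (V i))
    (hKcov : (⋃ j, b j '' Kj j) = K)
    (hVcov : (⋃ i, u i '' V i) = Set.univ \ K)
    (hdisj : Pairwise (Function.onFun Disjoint
      (Sum.elim (fun j : Fin m => b j '' Kj j) (fun i : Fin n => u i '' V i))))
    (S : Fin m → X → ℝ) (T : Fin n → X → ℝ)
    (σ : ℝ) (hσ0 : 0 ≤ σ) (hσ : σ < 1)
    (hS : ∀ j, ∀ x ∈ Kj j, |S j x| ≤ σ) (hT : ∀ i, ∀ x ∈ V i, |T i x| ≤ σ)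
    -- `F P Q` is the unique bounded fixed point of the affine RB operator `Φ(P)(Q)(S)(T)`
    (F : (Fin m → X → Y) → (Fin n → X → Y) → (X → Y))
    (hF : ∀ (P : Fin m → X → Y) (Q : Fin n → X → Y),
      (∀ j, IsBounded (P j '' Kj j)) → (∀ i, IsBounded (Q i '' V i)) →
      IsBounded (Set.range (F P Q)) ∧
      (∀ j, ∀ x ∈ Kj j, F P Q (b j x) = P j x + S j x • F P Q x) ∧
      (∀ i, ∀ x ∈ V i, F P Q (u i x) = Q i x + T i x • F P Q x)) :
    (∀ (P P' : Fin m → X → Y) (Q Q' : Fin n → X → Y),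
      (∀ j, IsBounded (P j '' Kj j)) → (∀ j, IsBounded (P' j '' Kj j)) →
      (∀ i, IsBounded (Q i '' V i)) → (∀ i, IsBounded (Q' i '' V i)) →
      F P Q = F P' Q' →
      (∀ j, ∀ x ∈ Kj j, P j x = P' j x) ∧ (∀ i, ∀ x ∈ V i, Q i x = Q' i x)) ∧
    (∀ f : X → Y, IsBounded (Set.range f) →
      F (fun j x => f (b j x) - S j x • f x) (fun i x => f (u i x) - T i x • f x) = f) := by

  constructor
  · intro P P' Q Q' hP hP' hQ hQ' heq
    obtain ⟨_, h1, h2⟩ := hF P Q hP hQ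
    obtain ⟨_, h1', h2'⟩ := hF P' Q' hP' hQ'
    constructor
    · intro j x hx
      have e1 := h1 j x hx
      rw [heq] at e1
      exact add_right_cancel (e1.symm.trans (h1' j x hx))
    · intro i x hx
      have e2 := h2 i x hx
      rw [heq] at e2
      exact add_right_cancel (e2.symm.trans (h2' i x hx))
  · intro f hf
    obtain ⟨Cf, hCf⟩ := isBounded_iff_forall_norm_le.mp hf
    set P : Fin m → X → Y := fun j x => f (b j x) - S j x • f x with hPdef
    set Q : Fin n → X → Y := fun i x => f (u i x) - T i x • f x with hQdef
    have hP : ∀ j, IsBounded (P j '' Kj j) := by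
      intro j
      rw [isBounded_iff_forall_norm_le]
      refine ⟨Cf + σ * Cf, ?_⟩
      rintro _ ⟨x, hx, rfl⟩
      calc ‖P j x‖ ≤ ‖f (b j x)‖ + ‖S j x • f x‖ := norm_sub_le _ _
        _ ≤ Cf + σ * Cf := by
            refine add_le_add (hCf _ ⟨b j x, rfl⟩) ?_
            rw [norm_smul, Real.norm_eq_abs]
            exact mul_le_mul (hS j x hx) (hCf _ ⟨x, rfl⟩) (norm_nonneg _)
              hσ0
    have hQ : ∀ i, IsBounded (Q i '' V i) := by
      intro i
      rw [isBounded_iff_forall_norm_le]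
      refine ⟨Cf + σ * Cf, ?_⟩
      rintro _ ⟨x, hx, rfl⟩
      calc ‖Q i x‖ ≤ ‖f (u i x)‖ + ‖T i x • f x‖ := norm_sub_le _ _
        _ ≤ Cf + σ * Cf := by
            refine add_le_add (hCf _ ⟨u i x, rfl⟩) ?_
            rw [norm_smul, Real.norm_eq_abs]
            exact mul_le_mul (hT i x hx) (hCf _ ⟨x, rfl⟩) (norm_nonneg _)
              hσ0
    obtain ⟨hgb, h1, h2⟩ := hF P Q hP hQ
    set g : X → Y := F P Q with hgdef
    obtain ⟨Cg, hCg⟩ := isBounded_iff_forall_norm_le.mp hgb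
    set d : ℝ := ⨆ x, ‖g x - f x‖ with hddef
    have hbdd : BddAbove (Set.range fun x => ‖g x - f x‖) := by
      refine ⟨Cg + Cf, ?_⟩
      rintro _ ⟨x, rfl⟩
      calc ‖g x - f x‖ ≤ ‖g x‖ + ‖f x‖ := norm_sub_le _ _
        _ ≤ Cg + Cf := add_le_add (hCg _ ⟨x, rfl⟩) (hCf _ ⟨x, rfl⟩)
    have hled : ∀ x, ‖g x - f x‖ ≤ d := fun x => le_ciSup hbdd x
    have key : ∀ x, ‖g x - f x‖ ≤ σ * d := by
      intro x
      by_cases hxK : x ∈ K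
      · rw [← hKcov] at hxK
        obtain ⟨_, ⟨j, rfl⟩, y, hy, rfl⟩ := hxK
        have := h1 j y hy
        have hg : g (b j y) - f (b j y) = S j y • (g y - f y) := by
          rw [this, hPdef]
          simp [smul_sub]
          abel
        rw [hg, norm_smul, Real.norm_eq_abs]
        exact mul_le_mul (hS j y hy) (hled y) (norm_nonneg _) hσ0
      · have hxV : x ∈ ⋃ i, u i '' V i := by
          rw [hVcov]; exact ⟨trivial, hxK⟩
        obtain ⟨_, ⟨i, rfl⟩, y, hy, rfl⟩ := hxV
        have := h2 i y hy
        have hg : g (u i y) - f (u i y) = T i y • (g y - f y) := by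
          rw [this, hQdef]
          simp [smul_sub]
          abel
        rw [hg, norm_smul, Real.norm_eq_abs]
        exact mul_le_mul (hT i y hy) (hled y) (norm_nonneg _) hσ0
    have hd : d ≤ σ * d := ciSup_le key
    have hd0 : d ≤ 0 := by nlinarith
    funext x
    have := (key x).trans (mul_nonpos_of_nonneg_of_nonpos hσ0 hd0)
    have : ‖g x - f x‖ = 0 := le_antisymm this (norm_nonneg _)
    have := norm_eq_zero.mp this
    exact sub_eq_zero.mp this
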